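/- Two-sample pairwise exchangeability of SENS samples (Theorem 2). Under the two-sample model X_{ij} = μ_{xi} + ε_{xij} (j ∈ [n_{xi}]), Y_{ij} = μ_{yi} + ε_{yij} (j ∈ [n_{yi}]), i ∈ [m], with n_{xi} ≥ 4, n_{yi} ≥ 4 and null set H₀ = {i : μ_{xi} = μ_{yi}}, suppose that for every i ∈ H₀, conditionally on all observations from the other units, the x-errors (ε_{xij})_j and the y-errors (ε_{yij})_j of unit i are independent of each other, each is almost surely an i.i.d. sample from a probability measure on ℝ admitting a density symmetric about zero. Partition [n_{xi}] into N_{xi1}, N_{xi2} and [n_{yi}] into N_{yi1}, N_{yi2}; let X̄_{ik}, Ȳ_{ik} be the corresponding half-sample means and S²_{xik}, S²_{yik} the half-sample variances; set S²_{xi} = ((n_{xi1}−1)S²_{xi1} + (n_{xi2}−1)S²_{xi2})/(n_{xi}−2) and similarly S²_{yi}; define V_i = (X̄_{i1}−Ȳ_{i1}) + (X̄_{i2}−Ȳ_{i2}), V_i⁰ = (X̄_{i1}−Ȳ_{i1}) − (X̄_{i2}−Ȳ_{i2}), S_i = √( (n_{xi}/(n_{xi1} n_{xi2})) S²_{xi}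 + (n_{yi}/(n_{yi1} n_{yi2})) S²_{yi} ), and T_i = h_i(V_i/S_i), T_i⁰ = h_i(V_i⁰/S_i) for an arbitrary fixed Borel measurable h_i : ℝ → ℝ. Then for every i ∈ H₀ the vectors T = (T_1,…,T_m) and T⁰ = (T_1⁰,…,T_m⁰) are pairwise exchangeable at index i: the joint law of (T, T⁰) is invariant under swapping T_i and T_i⁰. -/

import Mathlib

open MeasureTheory ProbabilityTheory
open scoped Classical

/-- Sample mean of the values `x j`, `j ∈ s`. -/
noncomputable def sampleMean {ι : Type*} (s : Finset ι) (x : ι → ℝ) : ℝ :=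
  (∑ j ∈ s, x j) / s.card

/-- Sample variance of the values `x j`, `j ∈ s`. -/
noncomputable def sampleVar {ι : Type*} (s : Finset ι) (x : ι → ℝ) : ℝ :=
  (∑ j ∈ s, (x j - sampleMean s x) ^ 2) / (s.card - 1)

/-- Swap the coordinates indexed by `J` between the two vectors of a pair. -/
def swapSet {m : ℕ} (J : Finset (Fin m)) (p : (Fin m → ℝ) × (Fin m → ℝ)) :
    (Fin m → ℝ) × (Fin m → ℝ) :=
  (fun j => if j ∈ J then p.2 j else p.1 j, fun j => if j ∈ J then p.1 j else p.2 j)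

lemma sampleMean_congr {ι : Type*} {s : Finset ι} {x y : ι → ℝ} (h : ∀ j ∈ s, x j = y j) :
    sampleMean s x = sampleMean s y := by
  unfold sampleMean; rw [Finset.sum_congr rfl h]

lemma sampleVar_congr {ι : Type*} {s : Finset ι} {x y : ι → ℝ} (h : ∀ j ∈ s, x j = y j) :
    sampleVar s x = sampleVar s y := by
  unfold sampleVar
  rw [sampleMean_congr h, Finset.sum_congr rfl (fun j hj => by rw [h j hj])]

lemma sampleMean_const_add {ι : Type*} {s : Finset ι} (hs : s.Nonempty) (c : ℝ) (x : ι → ℝ) :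
    sampleMean s (fun j => c + x j) = c + sampleMean s x := by
  have hc : (s.card : ℝ) ≠ 0 := by
    exact_mod_cast Finset.card_ne_zero_of_mem hs.choose_spec
  unfold sampleMean
  rw [Finset.sum_add_distrib, Finset.sum_const, nsmul_eq_mul]
  field_simp

lemma sampleMean_const_sub {ι : Type*} {s : Finset ι} (hs : s.Nonempty) (c : ℝ) (x : ι → ℝ) :
    sampleMean s (fun j => c - x j) = c - sampleMean s x := by
  have h := sampleMean_const_add hs c (fun j => - x j)
  simp only [sub_eq_add_neg]
  rw [h]
  unfold sampleMean
  rw [Finset.sum_neg_distrib, neg_div]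

lemma sampleVar_const_add {ι : Type*} {s : Finset ι} (hs : s.Nonempty) (c : ℝ) (x : ι → ℝ) :
    sampleVar s (fun j => c + x j) = sampleVar s x := by
  unfold sampleVar
  rw [sampleMean_const_add hs]
  congr 1
  apply Finset.sum_congr rfl
  intro j _; ring

lemma sampleVar_const_sub {ι : Type*} {s : Finset ι} (hs : s.Nonempty) (c : ℝ) (x : ι → ℝ) :
    sampleVar s (fun j => c - x j) = sampleVar s x := by
  unfold sampleVar
  rw [sampleMean_const_sub hs]
  congr 1
  · apply Finset.sum_congr rfl
    intro j _; ring

lemma measurable_sampleMean {ι : Type*} (s : Finset ι) :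
    Measurable fun x : ι → ℝ => sampleMean s x := by
  unfold sampleMean
  exact (Finset.measurable_sum s fun j _ => measurable_pi_apply j).div_const _

lemma measurable_sampleVar {ι : Type*} (s : Finset ι) :
    Measurable fun x : ι → ℝ => sampleVar s x := by
  unfold sampleVar
  exact ((Finset.measurable_sum s fun j _ =>
    ((measurable_pi_apply j).sub (measurable_sampleMean s)).pow_const 2).div_const _)

lemma map_neg_withDensity (f : ℝ → ENNReal) (hf : Measurable f) (hsymm : ∀ x, f (-x) = f x) :
    Measure.map (fun x : ℝ => -x) (volume.withDensity f) = volume.withDensity f := by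
  ext B hB
  rw [Measure.map_apply measurable_neg hB, withDensity_apply _ (measurable_neg hB),
    withDensity_apply _ hB]
  have h1 : ∫⁻ y in B, f y ∂(Measure.map (fun x : ℝ => -x) volume)
      = ∫⁻ x in (fun x : ℝ => -x) ⁻¹' B, f (-x) ∂volume :=
    setLIntegral_map hB hf measurable_neg
  rw [Measure.map_neg_eq_self (volume : Measure ℝ)] at h1
  have h2 : ∫⁻ x in (fun x : ℝ => -x) ⁻¹' B, f (-x) ∂volume
      = ∫⁻ x in (fun x : ℝ => -x) ⁻¹' B, f x ∂volume :=
    setLIntegral_congr_fun (measurable_neg hB)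
      (fun x _ => hsymm x)
  calc ∫⁻ x in Neg.neg ⁻¹' B, f x ∂volume
      = ∫⁻ x in (fun x : ℝ => -x) ⁻¹' B, f (-x) ∂volume := h2.symm
    _ = ∫⁻ y in B, f y ∂volume := h1.symm

lemma measurable_flipOn {n : ℕ} (s : Finset (Fin n)) :
    Measurable (fun x : Fin n → ℝ => fun j => if j ∈ s then -x j else x j) := by
  apply measurable_pi_lambda
  intro j
  by_cases hj : j ∈ s <;> simp only [hj, if_true, if_false]
  · exact (measurable_pi_apply j).neg
  · exact measurable_pi_apply j

lemma map_flipOn_pi {n : ℕ} (s : Finset (Fin n)) (ν : Measure ℝ) [IsProbabilityMeasure ν]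
    (hν : Measure.map (fun x : ℝ => -x) ν = ν) :
    Measure.map (fun x : Fin n → ℝ => fun j => if j ∈ s then -x j else x j)
      (Measure.pi fun _ => ν) = Measure.pi fun _ => ν := by
  refine (Measure.pi_eq fun t ht => ?_).symm
  rw [Measure.map_apply (measurable_flipOn s) (MeasurableSet.univ_pi ht)]
  have hpre : (fun x : Fin n → ℝ => fun j => if j ∈ s then -x j else x j) ⁻¹'
      Set.pi Set.univ t = Set.pi Set.univ (fun j => if j ∈ s then (fun a : ℝ => -a) ⁻¹' t j else t j) := by
    ext x
    simp only [Set.mem_preimage, Set.mem_pi, Set.mem_univ, forall_true_left]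
    refine forall_congr' fun j => ?_
    by_cases hj : j ∈ s <;> simp [hj]
  rw [hpre, Measure.pi_pi]
  refine Finset.prod_congr rfl fun j _ => ?_
  by_cases hj : j ∈ s <;> simp only [hj, if_true, if_false]
  rw [← Measure.map_apply measurable_neg (ht j), hν]

noncomputable def unitV {a b : ℕ} (N1 N2 : Finset (Fin a)) (M1 M2 : Finset (Fin b))
    (xv : Fin a → ℝ) (yv : Fin b → ℝ) : ℝ :=
  (sampleMean N1 xv - sampleMean M1 yv) + (sampleMean N2 xv - sampleMean M2 yv)

noncomputable def unitV0 {a b : ℕ} (N1 N2 : Finset (Fin a)) (M1 M2 : Finset (Fin b))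
    (xv : Fin a → ℝ) (yv : Fin b → ℝ) : ℝ :=
  (sampleMean N1 xv - sampleMean M1 yv) - (sampleMean N2 xv - sampleMean M2 yv)

noncomputable def unitS {a b : ℕ} (N1 N2 : Finset (Fin a)) (M1 M2 : Finset (Fin b))
    (xv : Fin a → ℝ) (yv : Fin b → ℝ) : ℝ :=
  Real.sqrt
    (((a : ℝ) / ((N1.card : ℝ) * (N2.card : ℝ))) *
        ((((N1.card : ℝ) - 1) * sampleVar N1 xv +
          ((N2.card : ℝ) - 1) * sampleVar N2 xv) / ((a : ℝ) - 2)) +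
      ((b : ℝ) / ((M1.card : ℝ) * (M2.card : ℝ))) *
        ((((M1.card : ℝ) - 1) * sampleVar M1 yv +
          ((M2.card : ℝ) - 1) * sampleVar M2 yv) / ((b : ℝ) - 2)))

section unitlemmas
variable {a b : ℕ} {N1 N2 : Finset (Fin a)} {M1 M2 : Finset (Fin b)}
  {c : ℝ} {ex : Fin a → ℝ} {ey : Fin b → ℝ}


lemma unit_mean_flip1 (hN : Disjoint N1 N2) :
    sampleMean N1 (fun l => c + (if l ∈ N2 then -ex l else ex l))
      = sampleMean N1 (fun l => c + ex l) :=
  sampleMean_congr fun l hl => by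
    rw [if_neg (Finset.disjoint_left.1 hN hl)]

lemma unit_mean_flip2 (hN2 : N2.Nonempty) :
    sampleMean N2 (fun l => c + (if l ∈ N2 then -ex l else ex l))
      = c - sampleMean N2 (fun l => ex l) := by
  rw [sampleMean_congr (fun l hl => by rw [if_pos hl]), show (fun l => c + -ex l) = fun l => c - ex l from funext fun l => by ring,
    sampleMean_const_sub hN2]

lemma unit_var_flip1 (hN : Disjoint N1 N2) :
    sampleVar N1 (fun l => c + (if l ∈ N2 then -ex l else ex l))
      = sampleVar N1 (fun l => c + ex l) :=
  sampleVar_congr fun l hl => by rw [if_neg (Finset.disjoint_left.1 hN hl)]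

lemma unit_var_flip2 (hN2 : N2.Nonempty) :
    sampleVar N2 (fun l => c + (if l ∈ N2 then -ex l else ex l))
      = sampleVar N2 (fun l => c + ex l) := by
  rw [sampleVar_congr (fun l hl => by rw [if_pos hl]),
    show (fun l => c + -ex l) = fun l => c - ex l from funext fun l => by ring,
    sampleVar_const_sub hN2, sampleVar_const_add hN2]

lemma unitV_flip (hN : Disjoint N1 N2) (hM : Disjoint M1 M2) (hN2 : N2.Nonempty) (hM2 : M2.Nonempty) :
    unitV N1 N2 M1 M2 (fun l => c + (if l ∈ N2 then -ex l else ex l))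
        (fun l => c + (if l ∈ M2 then -ey l else ey l))
      = unitV0 N1 N2 M1 M2 (fun l => c + ex l) (fun l => c + ey l) := by
  unfold unitV unitV0
  rw [unit_mean_flip1 hN, unit_mean_flip1 hM, unit_mean_flip2 hN2, unit_mean_flip2 hM2,
    sampleMean_const_add hN2, sampleMean_const_add hM2]
  ring

lemma unitV0_flip (hN : Disjoint N1 N2) (hM : Disjoint M1 M2) (hN2 : N2.Nonempty) (hM2 : M2.Nonempty) :
    unitV0 N1 N2 M1 M2 (fun l => c + (if l ∈ N2 then -ex l else ex l))
        (fun l => c + (if l ∈ M2 then -ey l else ey l))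
      = unitV N1 N2 M1 M2 (fun l => c + ex l) (fun l => c + ey l) := by
  unfold unitV unitV0
  rw [unit_mean_flip1 hN, unit_mean_flip1 hM, unit_mean_flip2 hN2, unit_mean_flip2 hM2,
    sampleMean_const_add hN2, sampleMean_const_add hM2]
  ring

lemma unitS_flip (hN : Disjoint N1 N2) (hM : Disjoint M1 M2) (hN2 : N2.Nonempty) (hM2 : M2.Nonempty) :
    unitS N1 N2 M1 M2 (fun l => c + (if l ∈ N2 then -ex l else ex l))
        (fun l => c + (if l ∈ M2 then -ey l else ey l))
      = unitS N1 N2 M1 M2 (fun l => c + ex l) (fun l => c + ey l) := by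
  unfold unitS
  rw [unit_var_flip1 hN, unit_var_flip1 hM, unit_var_flip2 hN2, unit_var_flip2 hM2]

end unitlemmas

def fill {m : ℕ} (n : Fin m → ℕ) (i : Fin m) (c : ℝ)
    (a : (k : {k : Fin m // k ≠ i}) → Fin (n k.1) → ℝ) (e : Fin (n i) → ℝ) :
    (j : Fin m) → Fin (n j) → ℝ :=
  fun j => if hj : j = i then fun l => c + e (Fin.cast (congrArg n hj) l) else a ⟨j, hj⟩

lemma fill_ne {m : ℕ} (n : Fin m → ℕ) (i : Fin m) (c : ℝ) (a) (e) {j : Fin m} (hj : j ≠ i) :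
    fill n i c a e j = a ⟨j, hj⟩ := dif_neg hj

lemma fill_eq {m : ℕ} (n : Fin m → ℕ) (i : Fin m) (c : ℝ) (a) (e) :
    fill n i c a e i = fun l => c + e l := by
  funext l
  simp [fill]


noncomputable def sensG {m : ℕ} {nx ny : Fin m → ℕ}
    (Nx₁ Nx₂ : (i : Fin m) → Finset (Fin (nx i))) (Ny₁ Ny₂ : (i : Fin m) → Finset (Fin (ny i)))
    (h : Fin m → ℝ → ℝ) (i : Fin m) (cx cy : ℝ)
    (p : (((k : {k : Fin m // k ≠ i}) → Fin (nx k.1) → ℝ) ×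
        ((k : {k : Fin m // k ≠ i}) → Fin (ny k.1) → ℝ)) ×
      ((Fin (nx i) → ℝ) × (Fin (ny i) → ℝ))) : (Fin m → ℝ) × (Fin m → ℝ) :=
  (fun j => h j (unitV (Nx₁ j) (Nx₂ j) (Ny₁ j) (Ny₂ j)
        (fill nx i cx p.1.1 p.2.1 j) (fill ny i cy p.1.2 p.2.2 j) /
      unitS (Nx₁ j) (Nx₂ j) (Ny₁ j) (Ny₂ j)
        (fill nx i cx p.1.1 p.2.1 j) (fill ny i cy p.1.2 p.2.2 j)),
   fun j => h j (unitV0 (Nx₁ j) (Nx₂ j) (Ny₁ j) (Ny₂ j)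
        (fill nx i cx p.1.1 p.2.1 j) (fill ny i cy p.1.2 p.2.2 j) /
      unitS (Nx₁ j) (Nx₂ j) (Ny₁ j) (Ny₂ j)
        (fill nx i cx p.1.1 p.2.1 j) (fill ny i cy p.1.2 p.2.2 j)))


lemma sensG_equivariant {m : ℕ} {nx ny : Fin m → ℕ}
    (Nx₁ Nx₂ : (i : Fin m) → Finset (Fin (nx i))) (Ny₁ Ny₂ : (i : Fin m) → Finset (Fin (ny i)))
    (h : Fin m → ℝ → ℝ) (i : Fin m) (cx : ℝ)
    (hxdisj : Disjoint (Nx₁ i) (Nx₂ i)) (hydisj : Disjoint (Ny₁ i) (Ny₂ i))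
    (hNx2 : (Nx₂ i).Nonempty) (hNy2 : (Ny₂ i).Nonempty)
    (p : (((k : {k : Fin m // k ≠ i}) → Fin (nx k.1) → ℝ) ×
        ((k : {k : Fin m // k ≠ i}) → Fin (ny k.1) → ℝ)) ×
      ((Fin (nx i) → ℝ) × (Fin (ny i) → ℝ))) :
    sensG Nx₁ Nx₂ Ny₁ Ny₂ h i cx cx
        (p.1, ((fun l => if l ∈ Nx₂ i then -p.2.1 l else p.2.1 l),
               (fun l => if l ∈ Ny₂ i then -p.2.2 l else p.2.2 l)))
      = swapSet {i} (sensG Nx₁ Nx₂ Ny₁ Ny₂ h i cx cx p) := by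
  unfold sensG swapSet
  refine Prod.ext ?_ ?_ <;> funext j <;> by_cases hj : j = i
  · subst hj
    simp only [Finset.mem_singleton, if_pos rfl, if_true, fill_eq]
    rw [unitV_flip hxdisj hydisj hNx2 hNy2, unitS_flip hxdisj hydisj hNx2 hNy2]
  · simp only [Finset.mem_singleton, hj, if_false, fill_ne _ _ _ _ _ hj]
  · subst hj
    simp only [Finset.mem_singleton, if_pos rfl, if_true, fill_eq]
    rw [unitV0_flip hxdisj hydisj hNx2 hNy2, unitS_flip hxdisj hydisj hNx2 hNy2]
  · simp only [Finset.mem_singleton, hj, if_false, fill_ne _ _ _ _ _ hj]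

lemma measurable_fill_pair {m : ℕ} (n : Fin m → ℕ) (i : Fin m) (c : ℝ) (j : Fin m) :
    Measurable (fun q : ((k : {k : Fin m // k ≠ i}) → Fin (n k.1) → ℝ) × (Fin (n i) → ℝ) =>
      fill n i c q.1 q.2 j) := by
  by_cases hj : j = i
  · subst hj
    simp only [fill_eq]
    exact measurable_pi_lambda _ fun l =>
      measurable_const.add ((measurable_pi_apply l).comp measurable_snd)
  · simp only [fill_ne _ _ _ _ _ hj]
    exact (measurable_pi_apply _).comp measurable_fst

lemma measurable_sensG {m : ℕ} {nx ny : Fin m → ℕ}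
    (Nx₁ Nx₂ : (i : Fin m) → Finset (Fin (nx i))) (Ny₁ Ny₂ : (i : Fin m) → Finset (Fin (ny i)))
    (h : Fin m → ℝ → ℝ) (i : Fin m) (cx cy : ℝ) (hh : ∀ j, Measurable (h j)) :
    Measurable (sensG Nx₁ Nx₂ Ny₁ Ny₂ h i cx cy) := by
  have hX : ∀ j, Measurable fun p : (((k : {k : Fin m // k ≠ i}) → Fin (nx k.1) → ℝ) ×
        ((k : {k : Fin m // k ≠ i}) → Fin (ny k.1) → ℝ)) ×
      ((Fin (nx i) → ℝ) × (Fin (ny i) → ℝ)) => fill nx i cx p.1.1 p.2.1 j := fun j =>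
    (measurable_fill_pair nx i cx j).comp
      ((measurable_fst.comp measurable_fst).prodMk (measurable_fst.comp measurable_snd))
  have hY : ∀ j, Measurable fun p : (((k : {k : Fin m // k ≠ i}) → Fin (nx k.1) → ℝ) ×
        ((k : {k : Fin m // k ≠ i}) → Fin (ny k.1) → ℝ)) ×
      ((Fin (nx i) → ℝ) × (Fin (ny i) → ℝ)) => fill ny i cy p.1.2 p.2.2 j := fun j =>
    (measurable_fill_pair ny i cy j).comp
      ((measurable_snd.comp measurable_fst).prodMk (measurable_snd.comp measurable_snd))
  have hSm : ∀ j, Measurable fun p : (((k : {k : Fin m // k ≠ i}) → Fin (nx k.1) → ℝ) ×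
        ((k : {k : Fin m // k ≠ i}) → Fin (ny k.1) → ℝ)) ×
      ((Fin (nx i) → ℝ) × (Fin (ny i) → ℝ)) =>
      unitS (Nx₁ j) (Nx₂ j) (Ny₁ j) (Ny₂ j) (fill nx i cx p.1.1 p.2.1 j)
        (fill ny i cy p.1.2 p.2.2 j) := by
    intro j
    unfold unitS
    apply Measurable.sqrt
    exact ((measurable_const.mul ((((measurable_const.mul
        ((measurable_sampleVar _).comp (hX j))).add
        (measurable_const.mul ((measurable_sampleVar _).comp (hX j)))).div_const _))).add
      (measurable_const.mul ((((measurable_const.mul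
        ((measurable_sampleVar _).comp (hY j))).add
        (measurable_const.mul ((measurable_sampleVar _).comp (hY j)))).div_const _))))
  unfold sensG
  refine Measurable.prod ?_ ?_ <;> refine measurable_pi_lambda _ fun j => (hh j).comp ?_
  · refine Measurable.div ?_ (hSm j)
    unfold unitV
    exact (((measurable_sampleMean _).comp (hX j)).sub
        ((measurable_sampleMean _).comp (hY j))).add
      (((measurable_sampleMean _).comp (hX j)).sub ((measurable_sampleMean _).comp (hY j)))
  · refine Measurable.div ?_ (hSm j)
    unfold unitV0
    exact (((measurable_sampleMean _).comp (hX j)).sub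
        ((measurable_sampleMean _).comp (hY j))).sub
      (((measurable_sampleMean _).comp (hX j)).sub ((measurable_sampleMean _).comp (hY j)))

/-- **Two-sample pairwise exchangeability of SENS samples (Theorem 2).**
Under the two-sample model `X i j = μx i + εx i j`, `Y i j = μy i + εy i j` with at
least four observations per unit per sample, if for every null unit `i`
(i.e. `μx i = μy i`), conditionally on all observations from the other units, the
x-errors and y-errors of unit `i` are independent of each other and each is an i.i.d.
sample from a probability measure admitting a density symmetric about zero, then the
SENS vectors `T`, `T⁰` are pairwise exchangeable at every null index `i`. -/
theorem sens_two_sample_pairwise_exchangeability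
    {Ω : Type*} [MeasurableSpace Ω] (P : Measure Ω) [IsProbabilityMeasure P]
    (m : ℕ) (nx ny : Fin m → ℕ) (hnx : ∀ i, 4 ≤ nx i) (hny : ∀ i, 4 ≤ ny i)
    (μx μy : Fin m → ℝ)
    (εx : (i : Fin m) → Fin (nx i) → Ω → ℝ)
    (εy : (i : Fin m) → Fin (ny i) → Ω → ℝ)
    (hεxmeas : ∀ i j, Measurable (εx i j)) (hεymeas : ∀ i j, Measurable (εy i j))
    (X : (i : Fin m) → Fin (nx i) → Ω → ℝ)
    (Y : (i : Fin m) → Fin (ny i) → Ω → ℝ)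
    (hXdef : ∀ i j ω, X i j ω = μx i + εx i j ω)
    (hYdef : ∀ i j ω, Y i j ω = μy i + εy i j ω)
    -- For every null unit `i`, conditionally on the observations of all other units,
    -- the pair of error vectors of unit `i` is distributed as a product of two i.i.d.
    -- products of measures admitting densities symmetric about zero (so, in particular,
    -- the x-errors and y-errors of unit `i` are conditionally independent).
    (hcond : ∀ i : Fin m, μx i = μy i →
      ∃ (κ : Kernel
          (((k : {k : Fin m // k ≠ i}) → Fin (nx k.1) → ℝ) ×
            ((k : {k : Fin m // k ≠ i}) → Fin (ny k.1) → ℝ))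
          ((Fin (nx i) → ℝ) × (Fin (ny i) → ℝ)))
        (fx fy : (((k : {k : Fin m // k ≠ i}) → Fin (nx k.1) → ℝ) ×
            ((k : {k : Fin m // k ≠ i}) → Fin (ny k.1) → ℝ)) → ℝ → ENNReal),
        (∀ (A : Set (((k : {k : Fin m // k ≠ i}) → Fin (nx k.1) → ℝ) ×
              ((k : {k : Fin m // k ≠ i}) → Fin (ny k.1) → ℝ)))
            (B : Set ((Fin (nx i) → ℝ) × (Fin (ny i) → ℝ))),
            MeasurableSet A → MeasurableSet B →
          P {ω | ((fun k : {k : Fin m // k ≠ i} => fun j => X k.1 j ω),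
                  (fun k : {k : Fin m // k ≠ i} => fun j => Y k.1 j ω)) ∈ A ∧
              ((fun j => εx i j ω), (fun j => εy i j ω)) ∈ B}
            = ∫⁻ a in A, κ a B
                ∂(Measure.map (fun ω =>
                    ((fun k : {k : Fin m // k ≠ i} => fun j => X k.1 j ω),
                     (fun k : {k : Fin m // k ≠ i} => fun j => Y k.1 j ω))) P)) ∧
        (∀ᵐ a ∂(Measure.map (fun ω =>
              ((fun k : {k : Fin m // k ≠ i} => fun j => X k.1 j ω),
               (fun k : {k : Fin m // k ≠ i} => fun j => Y k.1 j ω))) P),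
          Measurable (fx a) ∧ Measurable (fy a) ∧
          (∫⁻ x, fx a x = 1) ∧ (∫⁻ x, fy a x = 1) ∧
          (∀ x : ℝ, fx a (-x) = fx a x) ∧ (∀ x : ℝ, fy a (-x) = fy a x) ∧
          κ a = (Measure.pi fun _ : Fin (nx i) =>
                    (volume : Measure ℝ).withDensity (fx a)).prod
                (Measure.pi fun _ : Fin (ny i) =>
                    (volume : Measure ℝ).withDensity (fy a))))
    -- the within-unit partitions of each of the two samples
    (Nx₁ Nx₂ : (i : Fin m) → Finset (Fin (nx i)))
    (Ny₁ Ny₂ : (i : Fin m) → Finset (Fin (ny i)))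
    (hxdisj : ∀ i, Disjoint (Nx₁ i) (Nx₂ i)) (hydisj : ∀ i, Disjoint (Ny₁ i) (Ny₂ i))
    (hxunion : ∀ i, Nx₁ i ∪ Nx₂ i = Finset.univ)
    (hyunion : ∀ i, Ny₁ i ∪ Ny₂ i = Finset.univ)
    (hxcard : ∀ i, (Nx₁ i).card = (nx i + 1) / 2)
    (hycard : ∀ i, (Ny₁ i).card = (ny i + 1) / 2)
    -- arbitrary fixed Borel measurable transformation for each unit
    (h : Fin m → ℝ → ℝ) (hh : ∀ i, Measurable (h i))
    (V V0 S T T0 : Fin m → Ω → ℝ)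
    (hV : ∀ i ω, V i ω
      = (sampleMean (Nx₁ i) (fun j => X i j ω) - sampleMean (Ny₁ i) (fun j => Y i j ω)) +
        (sampleMean (Nx₂ i) (fun j => X i j ω) - sampleMean (Ny₂ i) (fun j => Y i j ω)))
    (hV0 : ∀ i ω, V0 i ω
      = (sampleMean (Nx₁ i) (fun j => X i j ω) - sampleMean (Ny₁ i) (fun j => Y i j ω)) -
        (sampleMean (Nx₂ i) (fun j => X i j ω) - sampleMean (Ny₂ i) (fun j => Y i j ω)))
    (hS : ∀ i ω, S i ω = Real.sqrt
      (((nx i : ℝ) / (((Nx₁ i).card : ℝ) * ((Nx₂ i).card : ℝ))) *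
          (((((Nx₁ i).card : ℝ) - 1) * sampleVar (Nx₁ i) (fun j => X i j ω) +
            (((Nx₂ i).card : ℝ) - 1) * sampleVar (Nx₂ i) (fun j => X i j ω)) /
              ((nx i : ℝ) - 2)) +
        ((ny i : ℝ) / (((Ny₁ i).card : ℝ) * ((Ny₂ i).card : ℝ))) *
          (((((Ny₁ i).card : ℝ) - 1) * sampleVar (Ny₁ i) (fun j => Y i j ω) +
            (((Ny₂ i).card : ℝ) - 1) * sampleVar (Ny₂ i) (fun j => Y i j ω)) /
              ((ny i : ℝ) - 2))))
    (hT : ∀ i ω, T i ω = h i (V i ω / S i ω))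
    (hT0 : ∀ i ω, T0 i ω = h i (V0 i ω / S i ω))
    (i : Fin m) (hi : μx i = μy i) :
    Measure.map (swapSet {i})
        (Measure.map (fun ω => (fun j => T j ω, fun j => T0 j ω)) P)
      = Measure.map (fun ω => (fun j => T j ω, fun j => T0 j ω)) P := by
  classical
  obtain ⟨κ, fx, fy, hrect, hae⟩ := hcond i hi
  -- notation
  set OE : Ω → (((k : {k : Fin m // k ≠ i}) → Fin (nx k.1) → ℝ) ×
      ((k : {k : Fin m // k ≠ i}) → Fin (ny k.1) → ℝ)) ×
      ((Fin (nx i) → ℝ) × (Fin (ny i) → ℝ)) :=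
    fun ω => (((fun k : {k : Fin m // k ≠ i} => fun j => X k.1 j ω),
               (fun k : {k : Fin m // k ≠ i} => fun j => Y k.1 j ω)),
              ((fun j => εx i j ω), (fun j => εy i j ω))) with hOEdef
  -- nonemptiness of the second halves
  have hNx2 : (Nx₂ i).Nonempty := by
    rw [← Finset.card_pos]
    have h1 : (Nx₁ i).card + (Nx₂ i).card = nx i := by
      rw [← Finset.card_union_of_disjoint (hxdisj i), hxunion i, Finset.card_univ,
        Fintype.card_fin]
    have h2 := hxcard i
    have h3 := hnx i
    omega
  have hNy2 : (Ny₂ i).Nonempty := by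
    rw [← Finset.card_pos]
    have h1 : (Ny₁ i).card + (Ny₂ i).card = ny i := by
      rw [← Finset.card_union_of_disjoint (hydisj i), hyunion i, Finset.card_univ,
        Fintype.card_fin]
    have h2 := hycard i
    have h3 := hny i
    omega
  -- measurability facts
  have hτmeas : Measurable (fun e : (Fin (nx i) → ℝ) × (Fin (ny i) → ℝ) =>
      ((fun l => if l ∈ Nx₂ i then -e.1 l else e.1 l),
       (fun l => if l ∈ Ny₂ i then -e.2 l else e.2 l))) :=
    ((measurable_flipOn (Nx₂ i)).comp measurable_fst).prodMk
      ((measurable_flipOn (Ny₂ i)).comp measurable_snd)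
  have hσmeas : Measurable (fun p : (((k : {k : Fin m // k ≠ i}) → Fin (nx k.1) → ℝ) ×
      ((k : {k : Fin m // k ≠ i}) → Fin (ny k.1) → ℝ)) ×
      ((Fin (nx i) → ℝ) × (Fin (ny i) → ℝ)) =>
      (p.1, ((fun l => if l ∈ Nx₂ i then -p.2.1 l else p.2.1 l),
             (fun l => if l ∈ Ny₂ i then -p.2.2 l else p.2.2 l)))) :=
    measurable_fst.prodMk (hτmeas.comp measurable_snd)
  have hOEmeas : Measurable OE := by
    rw [hOEdef]
    refine Measurable.prod (Measurable.prod ?_ ?_) (Measurable.prod ?_ ?_)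
    · refine measurable_pi_lambda _ fun k => measurable_pi_lambda _ fun l => ?_
      simp only [hXdef]
      exact measurable_const.add (hεxmeas k.1 l)
    · refine measurable_pi_lambda _ fun k => measurable_pi_lambda _ fun l => ?_
      simp only [hYdef]
      exact measurable_const.add (hεymeas k.1 l)
    · exact measurable_pi_lambda _ fun j => hεxmeas i j
    · exact measurable_pi_lambda _ fun j => hεymeas i j
  have hGmeas : Measurable (sensG Nx₁ Nx₂ Ny₁ Ny₂ h i (μx i) (μx i)) :=
    measurable_sensG Nx₁ Nx₂ Ny₁ Ny₂ h i (μx i) (μx i) hh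
  have hswapmeas : Measurable (swapSet ({i} : Finset (Fin m))) := by
    unfold swapSet
    refine Measurable.prod ?_ ?_ <;> refine measurable_pi_lambda _ fun j => ?_ <;>
      by_cases hj : j ∈ ({i} : Finset (Fin m)) <;> simp only [hj, if_true, if_false]
    · exact (measurable_pi_apply j).comp measurable_snd
    · exact (measurable_pi_apply j).comp measurable_fst
    · exact (measurable_pi_apply j).comp measurable_fst
    · exact (measurable_pi_apply j).comp measurable_snd
  -- identification : the statistic map factors through OE
  have hfillX : ∀ ω (j : Fin m),
      fill nx i (μx i) (fun k : {k : Fin m // k ≠ i} => fun l => X k.1 l ω)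
        (fun l => εx i l ω) j = fun l => X j l ω := by
    intro ω j
    by_cases hj : j = i
    · subst hj
      rw [fill_eq]
      funext l
      rw [hXdef]
    · rw [fill_ne _ _ _ _ _ hj]
  have hfillY : ∀ ω (j : Fin m),
      fill ny i (μx i) (fun k : {k : Fin m // k ≠ i} => fun l => Y k.1 l ω)
        (fun l => εy i l ω) j = fun l => Y j l ω := by
    intro ω j
    by_cases hj : j = i
    · subst hj
      rw [fill_eq]
      funext l
      rw [hYdef, hi]
    · rw [fill_ne _ _ _ _ _ hj]
  have hGOE : ∀ ω, sensG Nx₁ Nx₂ Ny₁ Ny₂ h i (μx i) (μx i) (OE ω)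
      = (fun j => T j ω, fun j => T0 j ω) := by
    intro ω
    unfold sensG
    refine Prod.ext ?_ ?_ <;> funext j
    · show h j _ = T j ω
      rw [hOEdef]
      simp only [hfillX ω j, hfillY ω j]
      rw [hT, hV, hS]
      rfl
    · show h j _ = T0 j ω
      rw [hOEdef]
      simp only [hfillX ω j, hfillY ω j]
      rw [hT0, hV0, hS]
      rfl
  -- invariance of the conditional kernel under the flips
  have hκinv : ∀ᵐ a ∂(Measure.map (fun ω =>
        ((fun k : {k : Fin m // k ≠ i} => fun j => X k.1 j ω),
         (fun k : {k : Fin m // k ≠ i} => fun j => Y k.1 j ω))) P),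
      ∀ B : Set ((Fin (nx i) → ℝ) × (Fin (ny i) → ℝ)), MeasurableSet B →
        κ a ((fun e : (Fin (nx i) → ℝ) × (Fin (ny i) → ℝ) =>
          ((fun l => if l ∈ Nx₂ i then -e.1 l else e.1 l),
           (fun l => if l ∈ Ny₂ i then -e.2 l else e.2 l))) ⁻¹' B) = κ a B := by
    filter_upwards [hae] with a ⟨hfx, hfy, h1x, h1y, hsx, hsy, hκ⟩
    intro B hB
    haveI hxprob : IsProbabilityMeasure ((volume : Measure ℝ).withDensity (fx a)) :=
      ⟨by rw [withDensity_apply _ MeasurableSet.univ, Measure.restrict_univ]; exact h1x⟩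
    haveI hyprob : IsProbabilityMeasure ((volume : Measure ℝ).withDensity (fy a)) :=
      ⟨by rw [withDensity_apply _ MeasurableSet.univ, Measure.restrict_univ]; exact h1y⟩
    have hmapτ : Measure.map (fun e : (Fin (nx i) → ℝ) × (Fin (ny i) → ℝ) =>
        ((fun l => if l ∈ Nx₂ i then -e.1 l else e.1 l),
         (fun l => if l ∈ Ny₂ i then -e.2 l else e.2 l))) (κ a) = κ a := by
      have hτeq : (fun e : (Fin (nx i) → ℝ) × (Fin (ny i) → ℝ) =>
          ((fun l => if l ∈ Nx₂ i then -e.1 l else e.1 l),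
           (fun l => if l ∈ Ny₂ i then -e.2 l else e.2 l)))
          = Prod.map (fun x : Fin (nx i) → ℝ => fun l => if l ∈ Nx₂ i then -x l else x l)
              (fun y : Fin (ny i) → ℝ => fun l => if l ∈ Ny₂ i then -y l else y l) := rfl
      rw [hκ, hτeq, ← Measure.map_prod_map _ _ (measurable_flipOn (Nx₂ i))
          (measurable_flipOn (Ny₂ i)),
        map_flipOn_pi (Nx₂ i) _ (map_neg_withDensity (fx a) hfx hsx),
        map_flipOn_pi (Ny₂ i) _ (map_neg_withDensity (fy a) hfy hsy)]
    conv_rhs => rw [← hmapτ, Measure.map_apply hτmeas hB]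
  -- the joint law of (others, unit-i errors) is invariant under the flips
  have hswap_rect : Measure.map (fun p : (((k : {k : Fin m // k ≠ i}) → Fin (nx k.1) → ℝ) ×
        ((k : {k : Fin m // k ≠ i}) → Fin (ny k.1) → ℝ)) ×
        ((Fin (nx i) → ℝ) × (Fin (ny i) → ℝ)) =>
        (p.1, ((fun l => if l ∈ Nx₂ i then -p.2.1 l else p.2.1 l),
               (fun l => if l ∈ Ny₂ i then -p.2.2 l else p.2.2 l))))
        (Measure.map OE P) = Measure.map OE P := by
    haveI : IsProbabilityMeasure (Measure.map OE P) :=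
      Measure.isProbabilityMeasure_map hOEmeas.aemeasurable
    haveI : IsProbabilityMeasure (Measure.map (fun p : (((k : {k : Fin m // k ≠ i}) → Fin (nx k.1) → ℝ) ×
        ((k : {k : Fin m // k ≠ i}) → Fin (ny k.1) → ℝ)) ×
        ((Fin (nx i) → ℝ) × (Fin (ny i) → ℝ)) =>
        (p.1, ((fun l => if l ∈ Nx₂ i then -p.2.1 l else p.2.1 l),
               (fun l => if l ∈ Ny₂ i then -p.2.2 l else p.2.2 l))))
        (Measure.map OE P)) :=
      Measure.isProbabilityMeasure_map hσmeas.aemeasurable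
    refine ext_of_generate_finite _ generateFrom_prod.symm isPiSystem_prod ?_ ?_
    · rintro _ ⟨A, hA, B, hB, rfl⟩
      simp only [Set.mem_setOf_eq] at hA hB
      rw [Measure.map_apply hσmeas (hA.prod hB)]
      have hpre : (fun p : (((k : {k : Fin m // k ≠ i}) → Fin (nx k.1) → ℝ) ×
          ((k : {k : Fin m // k ≠ i}) → Fin (ny k.1) → ℝ)) ×
          ((Fin (nx i) → ℝ) × (Fin (ny i) → ℝ)) =>
          (p.1, ((fun l => if l ∈ Nx₂ i then -p.2.1 l else p.2.1 l),
                 (fun l => if l ∈ Ny₂ i then -p.2.2 l else p.2.2 l)))) ⁻¹' (A ×ˢ B)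
          = A ×ˢ ((fun e : (Fin (nx i) → ℝ) × (Fin (ny i) → ℝ) =>
            ((fun l => if l ∈ Nx₂ i then -e.1 l else e.1 l),
             (fun l => if l ∈ Ny₂ i then -e.2 l else e.2 l))) ⁻¹' B) := rfl
      rw [hpre, Measure.map_apply hOEmeas (hA.prod (hτmeas hB)),
        Measure.map_apply hOEmeas (hA.prod hB)]
      have e1 : OE ⁻¹' (A ×ˢ ((fun e : (Fin (nx i) → ℝ) × (Fin (ny i) → ℝ) =>
          ((fun l => if l ∈ Nx₂ i then -e.1 l else e.1 l),
           (fun l => if l ∈ Ny₂ i then -e.2 l else e.2 l))) ⁻¹' B))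
          = {ω | ((fun k : {k : Fin m // k ≠ i} => fun j => X k.1 j ω),
                  (fun k : {k : Fin m // k ≠ i} => fun j => Y k.1 j ω)) ∈ A ∧
              ((fun j => εx i j ω), (fun j => εy i j ω)) ∈
                ((fun e : (Fin (nx i) → ℝ) × (Fin (ny i) → ℝ) =>
                  ((fun l => if l ∈ Nx₂ i then -e.1 l else e.1 l),
                   (fun l => if l ∈ Ny₂ i then -e.2 l else e.2 l))) ⁻¹' B)} := rfl
      have e2 : OE ⁻¹' (A ×ˢ B)
          = {ω | ((fun k : {k : Fin m // k ≠ i} => fun j => X k.1 j ω),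
                  (fun k : {k : Fin m // k ≠ i} => fun j => Y k.1 j ω)) ∈ A ∧
              ((fun j => εx i j ω), (fun j => εy i j ω)) ∈ B} := rfl
      rw [e1, e2, hrect A _ hA (hτmeas hB), hrect A B hA hB]
      refine lintegral_congr_ae ?_
      filter_upwards [ae_restrict_of_ae hκinv] with a ha
      exact ha B hB
    · rw [Measure.map_apply hσmeas MeasurableSet.univ, Set.preimage_univ]
  -- conclusion
  have hcomm : swapSet ({i} : Finset (Fin m)) ∘ sensG Nx₁ Nx₂ Ny₁ Ny₂ h i (μx i) (μx i)
      = sensG Nx₁ Nx₂ Ny₁ Ny₂ h i (μx i) (μx i) ∘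
        (fun p : (((k : {k : Fin m // k ≠ i}) → Fin (nx k.1) → ℝ) ×
          ((k : {k : Fin m // k ≠ i}) → Fin (ny k.1) → ℝ)) ×
          ((Fin (nx i) → ℝ) × (Fin (ny i) → ℝ)) =>
          (p.1, ((fun l => if l ∈ Nx₂ i then -p.2.1 l else p.2.1 l),
                 (fun l => if l ∈ Ny₂ i then -p.2.2 l else p.2.2 l)))) :=
    funext fun p =>
      (sensG_equivariant Nx₁ Nx₂ Ny₁ Ny₂ h i (μx i) (hxdisj i) (hydisj i) hNx2 hNy2 p).symm
  have hmaps : Measure.map (fun ω => (fun j => T j ω, fun j => T0 j ω)) P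
      = Measure.map (sensG Nx₁ Nx₂ Ny₁ Ny₂ h i (μx i) (μx i)) (Measure.map OE P) := by
    rw [Measure.map_map hGmeas hOEmeas]
    exact congrArg (fun f => Measure.map f P) (funext fun ω => (hGOE ω).symm)
  rw [hmaps, Measure.map_map hswapmeas hGmeas, hcomm,
    ← Measure.map_map hGmeas hσmeas, hswap_rect]
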